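/- For an integer n ≥ 3, let M(n,2) denote the number of solutions (X, x, Y, y) with 1 < x < y to equation (1) satisfying n − XY = 2. Then M(n,2) = (1/2)·θ(n)·θ(n−2) − 1 if n is odd, and M(n,2) = θ_odd(n)·θ_odd(n−2) − 1 if n is even. -/

import Mathlib

/-- `M(n, k)`: the number of solutions `(X, x, Y, y)` in positive integers with
`1 < x < y` to `(X + 1/x)(Y + 1/y) = n`, i.e. `(Xx + 1)(Yy + 1) = n·x·y`,
satisfying `n - XY = k`. A quadruple `q` encodes
`(X, x, Y, y) = (q.1, q.2.1, q.2.2.1, q.2.2.2)`. -/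
noncomputable def M (n k : ℕ) : ℕ :=
  Nat.card {q : ℕ × ℕ × ℕ × ℕ | 0 < q.1 ∧ 0 < q.2.2.1 ∧ 1 < q.2.1 ∧ q.2.1 < q.2.2.2 ∧
    (q.1 * q.2.1 + 1) * (q.2.2.1 * q.2.2.2 + 1) = n * q.2.1 * q.2.2.2 ∧
    n - q.1 * q.2.2.1 = k}

/-- The number of odd positive divisors of `m`. -/
def thetaOdd (m : ℕ) : ℕ := (m.divisors.filter fun d => Odd d).card

namespace MnTwo

/-- set of all parameter pairs `(t,u)`: `t ∣ n`, `u ∣ n-2`, with matching parities. -/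
def Fall (n : ℕ) : Finset (ℕ × ℕ) :=
  (n.divisors ×ˢ (n-2).divisors).filter
    (fun p => p.1 % 2 = p.2 % 2 ∧ (n / p.1) % 2 = ((n-2) / p.2) % 2)

def Flt (n : ℕ) : Finset (ℕ × ℕ) :=
  (Fall n).filter (fun p => p.1 + p.2 < n / p.1 + (n-2) / p.2)

def Fs (n : ℕ) : Finset (ℕ × ℕ) :=
  (Flt n).filter (fun p => 4 ≤ p.1 + p.2)

lemma mem_Fall {n t u : ℕ} (hn : 3 ≤ n) :
    (t, u) ∈ Fall n ↔ t ∣ n ∧ u ∣ (n-2) ∧ t % 2 = u % 2 ∧ (n / t) % 2 = ((n-2) / u) % 2 := by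
  simp only [Fall, Finset.mem_filter, Finset.mem_product, Nat.mem_divisors]
  constructor
  · rintro ⟨⟨⟨h1, _⟩, h2, _⟩, h3, h4⟩; exact ⟨h1, h2, h3, h4⟩
  · rintro ⟨h1, h2, h3, h4⟩
    exact ⟨⟨⟨h1, by omega⟩, h2, by omega⟩, h3, h4⟩

lemma facts_of_mem_Fall {n t u : ℕ} (hn : 3 ≤ n) (h : (t, u) ∈ Fall n) :
    0 < t ∧ 0 < u ∧ t * (n / t) = n ∧ u * ((n-2) / u) = n - 2 := by
  rw [mem_Fall hn] at h
  obtain ⟨h1, h2, -, -⟩ := h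
  have ht : 0 < t := Nat.pos_of_dvd_of_pos h1 (by omega)
  have hu : 0 < u := Nat.pos_of_dvd_of_pos h2 (by omega)
  exact ⟨ht, hu, Nat.mul_div_cancel' h1, Nat.mul_div_cancel' h2⟩

/-- key: for a parameter pair, the two "x" and "y" sums are never equal. -/
lemma sums_ne {n t u : ℕ} (hn : 3 ≤ n) (h : (t, u) ∈ Fall n) :
    t + u ≠ n / t + (n-2) / u := by
  obtain ⟨ht, hu, hts, huv⟩ := facts_of_mem_Fall hn h
  rw [mem_Fall hn] at h
  obtain ⟨-, -, hpar, -⟩ := h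
  set s := n / t with hs
  set v := (n-2) / u with hv
  intro heq
  -- t + u is even
  obtain ⟨x, hx⟩ : ∃ x, t + u = 2 * x := ⟨(t + u) / 2, by omega⟩
  have hxpos : 0 < x := by omega
  -- over ℤ
  have e1 : (t : ℤ) = 2 * x - u := by omega
  have e2 : (s : ℤ) = 2 * x - v := by omega
  have e3 : (t : ℤ) * s = n := by exact_mod_cast hts
  have e4 : (u : ℤ) * v + 2 = n := by
    have h5 : u * v + 2 = n := by omega
    exact_mod_cast h5
  have key : (x : ℤ) * (u + v) + 1 = 2 * (x * x) := by
    rw [e1, e2] at e3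
    nlinarith [e3, e4]
  -- hence x divides 1
  have hxdvd : (x : ℤ) ∣ 1 := by
    have d1 : (x : ℤ) ∣ (x : ℤ) * (u + v) := Dvd.intro _ rfl
    have d2 : (x : ℤ) ∣ 2 * (x * x) := ⟨2 * x, by ring⟩
    have : (x : ℤ) ∣ 1 := by
      have := dvd_sub d2 d1
      rwa [show 2 * ((x:ℤ) * x) - x * (u + v) = 1 by linarith] at this
    exact this
  have hx1 : x = 1 := by
    have := Int.le_of_dvd one_pos hxdvd
    omega
  -- so t = u = 1, s = n, v = n - 2
  have htu : t = 1 ∧ u = 1 := by omega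
  have hsn : s = n := by
    have : (1 : ℕ) * s = n := by rw [← htu.1]; exact hts
    omega
  have hvn : v = n - 2 := by
    have : (1 : ℕ) * v = n - 2 := by rw [← htu.2]; exact huv
    omega
  omega


/-- the swap involution on parameter pairs. -/
def sig (n : ℕ) (p : ℕ × ℕ) : ℕ × ℕ := (n / p.1, (n-2) / p.2)

lemma sig_mem {n : ℕ} {p : ℕ × ℕ} (hn : 3 ≤ n) (h : p ∈ Fall n) :
    sig n p ∈ Fall n ∧ sig n (sig n p) = p := by
  obtain ⟨t, u⟩ := p
  rw [mem_Fall hn] at h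
  obtain ⟨h1, h2, h3, h4⟩ := h
  have hd1 : n / (n / t) = t := Nat.div_div_self h1 (by omega)
  have hd2 : (n-2) / ((n-2) / u) = u := Nat.div_div_self h2 (by omega)
  constructor
  · rw [mem_Fall hn]
    exact ⟨Nat.div_dvd_of_dvd h1, Nat.div_dvd_of_dvd h2, h4, by simp only [sig]; rw [hd1, hd2]; exact h3⟩
  · simp [sig, hd1, hd2]

def Fgt (n : ℕ) : Finset (ℕ × ℕ) :=
  (Fall n).filter (fun p => n / p.1 + (n-2) / p.2 < p.1 + p.2)

lemma card_Fall_eq (n : ℕ) (hn : 3 ≤ n) : (Fall n).card = 2 * (Flt n).card := by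
  have hsplit : (Flt n).card + (Fgt n).card = (Fall n).card := by
    rw [show Fgt n = (Fall n).filter (fun p => ¬ (p.1 + p.2 < n / p.1 + (n-2) / p.2)) from ?_]
    · exact Finset.card_filter_add_card_filter_not _
    · apply Finset.filter_congr
      intro p hp
      have hne : p.1 + p.2 ≠ n / p.1 + (n-2) / p.2 := by
        obtain ⟨a, b⟩ := p; exact sums_ne hn (by simpa using hp)
      constructor
      · exact fun h' => lt_asymm h'
      · intro h'
        exact lt_of_le_of_ne (le_of_not_gt h') hne.symm
  have hbij : (Flt n).card = (Fgt n).card := by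
    apply Finset.card_nbij' (sig n) (sig n)
    · intro a ha
      simp only [Finset.mem_coe, Flt, Finset.mem_filter] at ha
      obtain ⟨haF, halt⟩ := ha
      obtain ⟨hmem, hinv⟩ := sig_mem hn haF
      simp only [Finset.mem_coe, Fgt, Finset.mem_filter]
      refine ⟨hmem, ?_⟩
      have h1 : n / (n / a.1) = a.1 := by
        have := congrArg Prod.fst hinv; simpa [sig] using this
      have h2 : (n-2) / ((n-2) / a.2) = a.2 := by
        have := congrArg Prod.snd hinv; simpa [sig] using this
      simp only [sig]
      rw [h1, h2]; exact halt
    · intro b hb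
      simp only [Finset.mem_coe, Fgt, Finset.mem_filter] at hb
      obtain ⟨hbF, hbgt⟩ := hb
      obtain ⟨hmem, hinv⟩ := sig_mem hn hbF
      simp only [Finset.mem_coe, Flt, Finset.mem_filter]
      refine ⟨hmem, ?_⟩
      have h1 : n / (n / b.1) = b.1 := by
        have := congrArg Prod.fst hinv; simpa [sig] using this
      have h2 : (n-2) / ((n-2) / b.2) = b.2 := by
        have := congrArg Prod.snd hinv; simpa [sig] using this
      simp only [sig]
      rw [h1, h2]; exact hbgt
    · intro a ha
      exact (sig_mem hn (by simpa [Flt, Finset.mem_filter] using (Finset.mem_filter.1 ha).1)).2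
    · intro b hb
      exact (sig_mem hn (Finset.mem_filter.1 hb).1).2
  omega

lemma one_one_mem_Flt (n : ℕ) (hn : 3 ≤ n) : ((1, 1) : ℕ × ℕ) ∈ Flt n := by
  simp only [Flt, Finset.mem_filter]
  refine ⟨(mem_Fall hn).2 ⟨one_dvd _, one_dvd _, rfl, ?_⟩, ?_⟩
  · simp only [Nat.div_one]; omega
  · simp only [Nat.div_one]; omega

lemma Fs_eq_erase (n : ℕ) (hn : 3 ≤ n) : Fs n = (Flt n).erase (1, 1) := by
  ext ⟨t, u⟩
  simp only [Fs, Finset.mem_filter, Finset.mem_erase]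
  constructor
  · rintro ⟨hmem, h4⟩
    refine ⟨?_, hmem⟩
    intro h
    rw [Prod.ext_iff] at h
    simp at h
    omega
  · rintro ⟨hne, hmem⟩
    refine ⟨hmem, ?_⟩
    have hF : (t, u) ∈ Fall n := (Finset.mem_filter.1 hmem).1
    obtain ⟨ht, hu, -, -⟩ := facts_of_mem_Fall hn hF
    have hpar : t % 2 = u % 2 := ((mem_Fall hn).1 hF).2.2.1
    have : ¬(t = 1 ∧ u = 1) := by
      intro ⟨a, b⟩; exact hne (by rw [a, b])
    omega


lemma odd_of_dvd {n d : ℕ} (hd : d ∣ n) (h : n % 2 = 1) : d % 2 = 1 := by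
  obtain ⟨k, hk⟩ := hd
  by_contra hcon
  have hd2 : d % 2 = 0 := by omega
  obtain ⟨m, hm⟩ : ∃ m, d = 2 * m := ⟨d / 2, by omega⟩
  have : n = 2 * (m * k) := by rw [hk, hm]; ring
  omega

lemma card_Fall_odd (n : ℕ) (hn : 3 ≤ n) (hodd : n % 2 = 1) :
    (Fall n).card = n.divisors.card * (n-2).divisors.card := by
  have : Fall n = n.divisors ×ˢ (n-2).divisors := by
    ext ⟨t, u⟩
    rw [show ((t,u) ∈ n.divisors ×ˢ (n-2).divisors) ↔ t ∣ n ∧ u ∣ (n-2) from ?_, mem_Fall hn]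
    · constructor
      · rintro ⟨h1, h2, -, -⟩; exact ⟨h1, h2⟩
      · rintro ⟨h1, h2⟩
        have ht := odd_of_dvd h1 hodd
        have hu := odd_of_dvd h2 (by omega)
        have hs := odd_of_dvd (Nat.div_dvd_of_dvd h1) hodd
        have hv := odd_of_dvd (Nat.div_dvd_of_dvd h2) (by omega : (n-2) % 2 = 1)
        exact ⟨h1, h2, by omega, by omega⟩
    · simp only [Finset.mem_product, Nat.mem_divisors]
      constructor
      · rintro ⟨⟨a, -⟩, b, -⟩; exact ⟨a, b⟩
      · rintro ⟨a, b⟩; exact ⟨⟨a, by omega⟩, b, by omega⟩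
  rw [this, Finset.card_product]

lemma thetaOdd_eq (m : ℕ) : thetaOdd m = (m.divisors.filter fun d => d % 2 = 1).card := by
  unfold thetaOdd
  congr 1
  apply Finset.filter_congr
  intro d _
  simp [Nat.odd_iff]

lemma card_Fall_even (n : ℕ) (hn : 3 ≤ n) (heven : n % 2 = 0) :
    (Fall n).card = 2 * (thetaOdd n * thetaOdd (n-2)) := by
  classical
  set D := n.divisors ×ˢ (n-2).divisors with hD
  set A := D.filter (fun p => p.1 % 2 = 1 ∧ p.2 % 2 = 1) with hA
  set B := D.filter (fun p => (n / p.1) % 2 = 1 ∧ ((n-2) / p.2) % 2 = 1) with hB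
  have hmemD : ∀ p : ℕ × ℕ, p ∈ D ↔ p.1 ∣ n ∧ p.2 ∣ (n-2) := by
    intro p
    simp only [hD, Finset.mem_product, Nat.mem_divisors]
    constructor
    · rintro ⟨⟨a, -⟩, b, -⟩; exact ⟨a, b⟩
    · rintro ⟨a, b⟩; exact ⟨⟨a, by omega⟩, b, by omega⟩
  -- if t and n/t both odd then n odd; if both even then 4 ∣ n
  have hsplit : Fall n = A ∪ B := by
    ext ⟨t, u⟩
    simp only [Finset.mem_union, hA, hB, Finset.mem_filter, mem_Fall hn, hmemD]
    constructor
    · rintro ⟨h1, h2, h3, h4⟩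
      have e1 := Nat.mul_div_cancel' h1
      have e2 := Nat.mul_div_cancel' h2
      rcases Nat.even_or_odd t with het | hot
      · -- t even hence u even; then cofactors must be odd else 4 ∣ n and 4 ∣ n-2
        right
        have hteven : t % 2 = 0 := Nat.even_iff.1 het
        have hsodd : (n / t) % 2 = 1 := by
          by_contra hcon
          -- all four even: contradiction
          obtain ⟨a, ha⟩ : ∃ a, t = 2 * a := ⟨t / 2, by omega⟩
          obtain ⟨b, hb⟩ : ∃ b, n / t = 2 * b := ⟨(n / t) / 2, by omega⟩
          obtain ⟨c, hc⟩ : ∃ c, (n-2) / u = 2 * c := ⟨((n-2) / u) / 2, by omega⟩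
          obtain ⟨d, hd⟩ : ∃ d, u = 2 * d := ⟨u / 2, by omega⟩
          rw [hb] at e1; rw [ha] at e1
          rw [hc] at e2; rw [hd] at e2
          have h4n : n = 4 * (a * b) := by rw [← e1]; ring
          have h4m : n - 2 = 4 * (d * c) := by rw [← e2]; ring
          omega
        exact ⟨⟨h1, h2⟩, hsodd, by omega⟩
      · left
        rw [Nat.odd_iff] at hot
        exact ⟨⟨h1, h2⟩, hot, by omega⟩
    · rintro (⟨⟨h1, h2⟩, h3, h4⟩ | ⟨⟨h1, h2⟩, h3, h4⟩)
      · -- t, u odd ⇒ cofactors even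
        have e1 := Nat.mul_div_cancel' h1
        have e2 := Nat.mul_div_cancel' h2
        have hs : (n / t) % 2 = 0 := by
          by_contra hcon
          have ho : (n / t) % 2 = 1 := by omega
          have : (t * (n / t)) % 2 = 1 := Nat.odd_iff.1 (Nat.odd_mul.2 ⟨Nat.odd_iff.2 h3, Nat.odd_iff.2 ho⟩)
          omega
        have hv : ((n-2) / u) % 2 = 0 := by
          by_contra hcon
          have ho : ((n-2) / u) % 2 = 1 := by omega
          have : (u * ((n-2) / u)) % 2 = 1 := Nat.odd_iff.1 (Nat.odd_mul.2 ⟨Nat.odd_iff.2 h4, Nat.odd_iff.2 ho⟩)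
          omega
        exact ⟨h1, h2, by omega, by omega⟩
      · -- cofactors odd ⇒ t, u even
        have e1 := Nat.mul_div_cancel' h1
        have e2 := Nat.mul_div_cancel' h2
        have ht : t % 2 = 0 := by
          by_contra hcon
          have ho : t % 2 = 1 := by omega
          have : (t * (n / t)) % 2 = 1 := Nat.odd_iff.1 (Nat.odd_mul.2 ⟨Nat.odd_iff.2 ho, Nat.odd_iff.2 h3⟩)
          omega
        have hu : u % 2 = 0 := by
          by_contra hcon
          have ho : u % 2 = 1 := by omega
          have : (u * ((n-2) / u)) % 2 = 1 := Nat.odd_iff.1 (Nat.odd_mul.2 ⟨Nat.odd_iff.2 ho, Nat.odd_iff.2 h4⟩)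
          omega
        exact ⟨h1, h2, by omega, by omega⟩
  have hdisj : Disjoint A B := by
    rw [Finset.disjoint_left]
    rintro ⟨t, u⟩ ha hb
    simp only [hA, hB, Finset.mem_filter, hmemD] at ha hb
    obtain ⟨⟨h1, -⟩, h3, -⟩ := ha
    obtain ⟨-, h5, -⟩ := hb
    have e1 := Nat.mul_div_cancel' h1
    have : (t * (n / t)) % 2 = 1 := Nat.odd_iff.1 (Nat.odd_mul.2 ⟨Nat.odd_iff.2 h3, Nat.odd_iff.2 h5⟩)
    omega
  have hcardA : A.card = thetaOdd n * thetaOdd (n-2) := by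
    rw [hA, hD, Finset.filter_product (fun a => a % 2 = 1) (fun a => a % 2 = 1), Finset.card_product, thetaOdd_eq, thetaOdd_eq]
  have hcardB : B.card = A.card := by
    apply Finset.card_nbij' (sig n) (sig n)
    · rintro ⟨t, u⟩ hb
      simp only [Finset.mem_coe, hB, Finset.mem_filter, hmemD] at hb
      obtain ⟨⟨h1, h2⟩, h3, h4⟩ := hb
      simp only [Finset.mem_coe, hA, Finset.mem_filter, hmemD, sig]
      exact ⟨⟨Nat.div_dvd_of_dvd h1, Nat.div_dvd_of_dvd h2⟩, h3, h4⟩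
    · rintro ⟨t, u⟩ ha
      simp only [Finset.mem_coe, hA, Finset.mem_filter, hmemD] at ha
      obtain ⟨⟨h1, h2⟩, h3, h4⟩ := ha
      simp only [Finset.mem_coe, hB, Finset.mem_filter, hmemD, sig]
      have hd1 : n / (n / t) = t := Nat.div_div_self h1 (by omega)
      have hd2 : (n-2) / ((n-2) / u) = u := Nat.div_div_self h2 (by omega)
      rw [hd1, hd2]
      exact ⟨⟨Nat.div_dvd_of_dvd h1, Nat.div_dvd_of_dvd h2⟩, h3, h4⟩
    · rintro ⟨t, u⟩ hb
      simp only [Finset.mem_coe, hB, Finset.mem_filter, hmemD] at hb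
      obtain ⟨⟨h1, h2⟩, -, -⟩ := hb
      simp only [sig, Prod.mk.injEq]
      exact ⟨Nat.div_div_self h1 (by omega), Nat.div_div_self h2 (by omega)⟩
    · rintro ⟨t, u⟩ ha
      simp only [Finset.mem_coe, hA, Finset.mem_filter, hmemD] at ha
      obtain ⟨⟨h1, h2⟩, -, -⟩ := ha
      simp only [sig, Prod.mk.injEq]
      exact ⟨Nat.div_div_self h1 (by omega), Nat.div_div_self h2 (by omega)⟩
  rw [hsplit, Finset.card_union_of_disjoint hdisj, hcardA, hcardB, hcardA]
  ring


def fmap (n : ℕ) (p : ℕ × ℕ) : ℕ × ℕ × ℕ × ℕ :=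
  ((n-2) / p.2, (p.1 + p.2) / 2, p.2, (n / p.1 + (n-2) / p.2) / 2)

lemma card_M (n : ℕ) (hn : 3 ≤ n) : M n 2 = (Fs n).card := by
  classical
  have hset : {q : ℕ × ℕ × ℕ × ℕ | 0 < q.1 ∧ 0 < q.2.2.1 ∧ 1 < q.2.1 ∧ q.2.1 < q.2.2.2 ∧
      (q.1 * q.2.1 + 1) * (q.2.2.1 * q.2.2.2 + 1) = n * q.2.1 * q.2.2.2 ∧
      n - q.1 * q.2.2.1 = 2} = ↑((Fs n).image (fmap n)) := by
    ext q
    simp only [Set.mem_setOf_eq, Finset.coe_image, Set.mem_image, Finset.mem_coe]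
    constructor
    · intro hq
      obtain ⟨X, x, Y, y⟩ := q
      dsimp only at hq
      obtain ⟨hX, hY, hx, hxy, heq, hk⟩ := hq
      have hXY : X * Y + 2 = n := by omega
      have hZ : ((X*x+1)*(Y*y+1) : ℤ) = (n:ℤ)*x*y := by exact_mod_cast heq
      have en : (X:ℤ)*Y + 2 = n := by exact_mod_cast hXY
      have h2 : (X:ℤ)*x + Y*y + 1 = 2*(x*y) := by linear_combination hZ - ((x:ℤ)*y)*en
      have h2n : X*x + Y*y + 1 = 2*(x*y) := by exact_mod_cast h2
      have hY2x : Y < 2*x := by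
        by_contra hcon
        push_neg at hcon
        have h1 : 2*x*y ≤ Y*y := Nat.mul_le_mul_right y hcon
        have h3 : 0 < X*x := Nat.mul_pos hX (by omega)
        nlinarith [h2n, h1, h3]
      have hX2y : X < 2*y := by
        by_contra hcon
        push_neg at hcon
        have h1 : 2*y*x ≤ X*x := Nat.mul_le_mul_right x hcon
        have h3 : 0 < Y*y := Nat.mul_pos hY (by omega)
        nlinarith [h2n, h1, h3]
      have htpos : 0 < 2*x - Y := by omega
      have hts : (2*x - Y) * (2*y - X) = n := by
        zify [show Y ≤ 2*x from le_of_lt hY2x, show X ≤ 2*y from le_of_lt hX2y]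
        linear_combination (-2 : ℤ)*h2 + en
      have hYX : Y * X = n - 2 := by rw [mul_comm]; omega
      have hdiv1 : n / (2*x - Y) = 2*y - X := by
        rw [← hts, Nat.mul_div_cancel_left _ htpos]
      have hdiv2 : (n-2) / Y = X := by rw [← hYX, Nat.mul_div_cancel_left _ hY]
      refine ⟨(2*x - Y, Y), ?_, ?_⟩
      · simp only [Fs, Flt, Finset.mem_filter]
        refine ⟨⟨(mem_Fall hn).2 ⟨⟨2*y - X, hts.symm⟩, ⟨X, hYX.symm⟩, by omega, ?_⟩, ?_⟩, ?_⟩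
        · rw [hdiv1, hdiv2]; omega
        · rw [hdiv1, hdiv2]; omega
        · omega
      · simp only [fmap, hdiv1, hdiv2, Prod.mk.injEq, true_and, and_true]
        omega
    · rintro ⟨⟨t, u⟩, hmem, rfl⟩
      simp only [Fs, Flt, Finset.mem_filter] at hmem
      obtain ⟨⟨hF, hlt⟩, h4le⟩ := hmem
      obtain ⟨htpos, hupos, hts, huv⟩ := facts_of_mem_Fall hn hF
      obtain ⟨h1, h2, h3, h4⟩ := (mem_Fall hn).1 hF
      simp only [fmap, Set.mem_setOf_eq]
      set s := n / t with hs_def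
      set v := (n-2) / u with hv_def
      have hvpos : 0 < v := Nat.pos_of_dvd_of_pos (Nat.div_dvd_of_dvd h2) (by omega)
      have hspos : 0 < s := Nat.pos_of_dvd_of_pos (Nat.div_dvd_of_dvd h1) (by omega)
      set x := (t + u) / 2 with hx_def
      set y := (s + v) / 2 with hy_def
      have hx : 2 * x = t + u := by omega
      have hy : 2 * y = s + v := by omega
      refine ⟨hvpos, hupos, by omega, by omega, ?_, ?_⟩
      · have e3 : (t:ℤ) * s = n := by exact_mod_cast hts
        have e4 : (u:ℤ) * v + 2 = n := by
          have : u * v + 2 = n := by omega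
          exact_mod_cast this
        have et : (t:ℤ) = 2*x - u := by omega
        have es : (s:ℤ) = 2*y - v := by omega
        rw [et, es] at e3
        have A4 : (4:ℤ) * ((v*x+1)*(u*y+1)) = 4*((n:ℤ)*x*y) := by
          linear_combination (4*(x:ℤ)*y + 2)*e4 - 2*e3
        have hZ : ((v*x+1)*(u*y+1) : ℤ) = (n:ℤ)*x*y := by linarith
        exact_mod_cast hZ
      · have hvu : v * u = n - 2 := by rw [mul_comm]; omega
        omega
  have hinj : Set.InjOn (fmap n) ↑(Fs n) := by
    rintro ⟨t, u⟩ hp ⟨t', u'⟩ hq h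
    simp only [fmap, Prod.mk.injEq] at h
    obtain ⟨-, hhalf, hu, -⟩ := h
    have hpF : (t, u) ∈ Fall n := by
      have := Finset.mem_coe.1 hp
      simp only [Fs, Flt, Finset.mem_filter] at this
      exact this.1.1
    have hqF : (t', u') ∈ Fall n := by
      have := Finset.mem_coe.1 hq
      simp only [Fs, Flt, Finset.mem_filter] at this
      exact this.1.1
    have p1 := ((mem_Fall hn).1 hpF).2.2.1
    have p2 := ((mem_Fall hn).1 hqF).2.2.1
    subst hu
    have : t = t' := by omega
    rw [this]
  show Nat.card _ = _
  rw [hset, Nat.card_coe_set_eq, Set.ncard_coe_finset,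
    Finset.card_image_of_injOn hinj]

end MnTwo

/-- Lemma 4: For `n ≥ 3`,
`M(n,2) = (1/2)·θ(n)·θ(n-2) - 1` if `n` is odd, and
`M(n,2) = θ_odd(n)·θ_odd(n-2) - 1` if `n` is even. -/
theorem M_n_two (n : ℕ) (hn : 3 ≤ n) :
    (Odd n → (M n 2 : ℝ) =
        (1 / 2) * (n.divisors.card : ℝ) * ((n - 2).divisors.card : ℝ) - 1) ∧
    (Even n → (M n 2 : ℝ) = (thetaOdd n : ℝ) * (thetaOdd (n - 2) : ℝ) - 1) := by
  have hM1 : M n 2 + 1 = (MnTwo.Flt n).card := by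
    rw [MnTwo.card_M n hn, MnTwo.Fs_eq_erase n hn,
      Finset.card_erase_of_mem (MnTwo.one_one_mem_Flt n hn)]
    have : 1 ≤ (MnTwo.Flt n).card :=
      Finset.card_pos.2 ⟨(1,1), MnTwo.one_one_mem_Flt n hn⟩
    omega
  have hM2 : 2 * (M n 2 + 1) = (MnTwo.Fall n).card := by
    rw [hM1, MnTwo.card_Fall_eq n hn]
  constructor
  · intro hodd
    rw [Nat.odd_iff] at hodd
    have h : 2 * (M n 2 + 1) = n.divisors.card * (n-2).divisors.card := by
      rw [hM2, MnTwo.card_Fall_odd n hn hodd]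
    have : (2 : ℝ) * (M n 2 + 1) = (n.divisors.card : ℝ) * ((n-2).divisors.card : ℝ) := by
      exact_mod_cast h
    linarith
  · intro heven
    rw [Nat.even_iff] at heven
    have h : 2 * (M n 2 + 1) = 2 * (thetaOdd n * thetaOdd (n-2)) := by
      rw [hM2, MnTwo.card_Fall_even n hn heven]
    have h2 : M n 2 + 1 = thetaOdd n * thetaOdd (n-2) := by omega
    have : ((M n 2 : ℝ) + 1) = (thetaOdd n : ℝ) * (thetaOdd (n-2) : ℝ) := by
      exact_mod_cast h2
    linarith
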